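/- Let $(A,*_A,\omega)$ be a commutative associative algebra with a nondegenerate Connes cocycle $\omega$, and define $\circ_A$ by $\omega(x\circ_A y, z) = \omega(y, x*_A z)$. Then $(A,\circ_A)$ is a Zinbiel algebra whose sub-adjacent commutative associative algebra is $(A,*_A)$, and $(A,\circ_A,\omega)$ is a quadratic Zinbiel algebra. -/
import Mathlib


/-- Let `(A, *, ω)` be a commutative associative algebra with a nondegenerate Connes
cocycle `ω`, and let `∘` be defined by `ω(x ∘ y, z) = ω(y, x * z)`.  Then `(A, ∘)` is a
Zinbiel algebra whose sub-adjacent commutative associative algebra is `(A, *)`, and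
`(A, ∘, ω)` is a quadratic Zinbiel algebra. -/
theorem connes_cocycle_to_quadratic_zinbiel {K : Type*} [Field K] {A : Type*}
    [AddCommGroup A] [Module K A]
    (smul : A →ₗ[K] A →ₗ[K] A)
    (hcomm : ∀ x y : A, smul x y = smul y x)
    (hassoc : ∀ x y z : A, smul (smul x y) z = smul x (smul y z))
    (ω : A →ₗ[K] A →ₗ[K] K)
    (hskew : ∀ x y : A, ω x y = -ω y x)
    (hnd : ∀ x : A, (∀ y : A, ω x y = 0) → x = 0)
    (hcc : ∀ x y z : A, ω (smul x y) z + ω (smul y z) x + ω (smul z x) y = 0)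
    (circ : A →ₗ[K] A →ₗ[K] A)
    (hdef : ∀ x y z : A, ω (circ x y) z = ω y (smul x z)) :
    (∀ x y z : A, circ x (circ y z) = circ (circ x y + circ y x) z) ∧
    (∀ x y : A, circ x y + circ y x = smul x y) ∧
    (∀ x y z : A, ω (circ x y) z = ω y (circ x z + circ z x)) := by
  have hext : ∀ a b : A, (∀ w : A, ω a w = ω b w) → a = b := by
    intro a b h
    have h0 : a - b = 0 := by
      apply hnd
      intro w
      simp [sub_eq_zero, h w]
    exact sub_eq_zero.mp h0
  -- sub-adjacent product
  have hsub : ∀ x y : A, circ x y + circ y x = smul x y := by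
    intro x y
    apply hext
    intro w
    have h1 := hdef x y w
    have h2 := hdef y x w
    have h3 := hcc x y w
    have s1 := hskew (smul y w) x
    have s2 := hskew (smul w x) y
    have e1 : smul w x = smul x w := hcomm w x
    simp only [map_add, LinearMap.add_apply]
    rw [h1, h2]
    rw [e1] at s2 h3
    linear_combination -h3 + s1 + s2
  refine ⟨?_, hsub, ?_⟩
  · intro x y z
    apply hext
    intro w
    rw [hsub x y]
    have h1 : ω (circ x (circ y z)) w = ω z (smul y (smul x w)) :=
      (hdef x (circ y z) w).trans (hdef y z (smul x w))
    have h2 : ω (circ (smul x y) z) w = ω z (smul (smul x y) w) := hdef (smul x y) z w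
    have hmid : smul y (smul x w) = smul (smul x y) w := by
      rw [← hassoc, hcomm y x]
    rw [h1, h2, hmid]
  · intro x y z
    rw [hdef x y z, ← hsub x z]
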